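/- arXiv:2309.03464 — 3 statements merged into one kernel-verified Lean document; each statement's English description precedes it below -/
import Mathlib

section
/- Let n be a nonempty finite index type and let A : Matrix n n ℝ be a square matrix with A i j ≥ 0 for all i, j, whose spectral radius satisfies λ(A) > 0. Then there exists a nonempty subset S of the index set such that the principal submatrix A_S = (A i j)_{i,j ∈ S} is irreducible and λ(A_S) = λ(A). -/
open Matrix

/-- The spectral radius of a real square matrix: the supremum of the moduli of the
complex eigenvalues, i.e. the spectral radius of the complexified matrix. -/
noncomputable def matrixSpectralRadius {n : Type*} [Fintype n] [DecidableEq n]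
    (A : Matrix n n ℝ) : ENNReal :=
  spectralRadius ℂ (A.map (Complex.ofReal : ℝ → ℂ))

/-- A square matrix (with nonnegative real entries) is irreducible if for every pair of
indices `i, j` some power `A ^ k` (`k ≥ 1`) has strictly positive `(i, j)` entry. -/
def MatrixIrreducible {n : Type*} [Fintype n] [DecidableEq n] (A : Matrix n n ℝ) : Prop :=
  ∀ i j, ∃ k : ℕ, 1 ≤ k ∧ 0 < (A ^ k) i j

lemma spectrum_submatrix_equiv {m n : Type*} [Fintype m] [DecidableEq m] [Fintype n]
    [DecidableEq n] (e : m ≃ n) (B : Matrix n n ℂ) :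
    spectrum ℂ (B.submatrix e e) = spectrum ℂ B := by
  have h : B.submatrix e e = Matrix.reindexAlgEquiv ℂ ℂ e.symm B := by
    simp [Matrix.reindexAlgEquiv_apply, Matrix.reindex_apply]
  rw [h, AlgEquiv.spectrum_eq]

lemma radius_submatrix_equiv {m n : Type*} [Fintype m] [DecidableEq m] [Fintype n]
    [DecidableEq n] (e : m ≃ n) (B : Matrix n n ℝ) :
    matrixSpectralRadius (B.submatrix e e) = matrixSpectralRadius B := by
  have h : (B.submatrix e e).map (Complex.ofReal : ℝ → ℂ)
      = (B.map Complex.ofReal).submatrix e e := rfl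
  simp only [matrixSpectralRadius, spectralRadius, h, spectrum_submatrix_equiv]

lemma pow_submatrix_equiv {m n : Type*} [Fintype m] [DecidableEq m] [Fintype n]
    [DecidableEq n] (e : m ≃ n) (B : Matrix n n ℝ) (k : ℕ) :
    (B.submatrix e e) ^ k = (B ^ k).submatrix e e := by
  have h : ∀ C : Matrix n n ℝ, C.submatrix e e = Matrix.reindexAlgEquiv ℝ ℝ e.symm C := by
    intro C; simp [Matrix.reindexAlgEquiv_apply, Matrix.reindex_apply]
  rw [h, h, ← map_pow]

lemma irreducible_submatrix_equiv {m n : Type*} [Fintype m] [DecidableEq m] [Fintype n]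
    [DecidableEq n] (e : m ≃ n) {B : Matrix n n ℝ} (hB : MatrixIrreducible B) :
    MatrixIrreducible (B.submatrix e e) := by
  intro i j
  obtain ⟨k, hk, hpos⟩ := hB (e i) (e j)
  exact ⟨k, hk, by rw [pow_submatrix_equiv]; exact hpos⟩

lemma pow_entry_nonneg {n : Type*} [Fintype n] [DecidableEq n] {A : Matrix n n ℝ}
    (hA : ∀ i j, 0 ≤ A i j) (k : ℕ) : ∀ i j, 0 ≤ (A ^ k) i j := by
  induction k with
  | zero => intro i j; simp [Matrix.one_apply]; split <;> norm_num
  | succ k ih =>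
    intro i j
    rw [pow_succ, Matrix.mul_apply]
    exact Finset.sum_nonneg fun u _ => mul_nonneg (ih i u) (hA u j)

lemma radius_isEmpty {m : Type*} [Fintype m] [DecidableEq m] [IsEmpty m]
    (B : Matrix m m ℝ) : matrixSpectralRadius B = 0 := by
  have h : spectrum ℂ (B.map (Complex.ofReal : ℝ → ℂ)) = ∅ := by
    ext z
    simp [spectrum.mem_iff, Matrix.isUnit_iff_isUnit_det, Matrix.det_isEmpty]
  simp [matrixSpectralRadius, spectralRadius, h]

lemma radius_split {n : Type*} [Fintype n] [DecidableEq n] (A : Matrix n n ℝ)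
    (p : n → Prop) [DecidablePred p]
    (h0 : ∀ t s, p t → ¬p s → A t s = 0) :
    matrixSpectralRadius A =
      matrixSpectralRadius (A.submatrix (Subtype.val : Subtype p → n) (Subtype.val : Subtype p → n)) ⊔
      matrixSpectralRadius (A.submatrix (Subtype.val : {x // ¬ p x} → n) (Subtype.val : {x // ¬ p x} → n)) := by
  set M := A.map (Complex.ofReal : ℝ → ℂ) with hM
  have hs : spectrum ℂ M =
      spectrum ℂ ((A.submatrix (Subtype.val : Subtype p → n) (Subtype.val : Subtype p → n)).map Complex.ofReal) ∪
      spectrum ℂ ((A.submatrix (Subtype.val : {x // ¬p x} → n) (Subtype.val : {x // ¬p x} → n)).map Complex.ofReal)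
      := by
    rw [← spectrum_submatrix_equiv (Equiv.sumCompl p) M]
    ext z
    have hblock : (algebraMap ℂ _ z) - M.submatrix (Equiv.sumCompl p) (Equiv.sumCompl p) =
        Matrix.fromBlocks
          ((algebraMap ℂ (Matrix (Subtype p) (Subtype p) ℂ) z) -
            (A.submatrix (Subtype.val : Subtype p → n) (Subtype.val : Subtype p → n)).map Complex.ofReal)
          0
          (-(M.submatrix (Subtype.val : {x // ¬p x} → n) (Subtype.val : Subtype p → n)))
          ((algebraMap ℂ (Matrix {x // ¬p x} {x // ¬p x} ℂ) z) -
            (A.submatrix (Subtype.val : {x // ¬p x} → n) (Subtype.val : {x // ¬p x} → n)).map Complex.ofReal) := by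
      ext (a | a) (b | b) <;>
        simp [Matrix.sub_apply, Matrix.algebraMap_matrix_apply, hM,
          Matrix.submatrix_apply, Matrix.map_apply, Subtype.ext_iff]
      exact h0 a.1 b.1 a.2 b.2
    rw [Set.mem_union, spectrum.mem_iff, spectrum.mem_iff, spectrum.mem_iff,
      Matrix.isUnit_iff_isUnit_det, hblock, Matrix.det_fromBlocks_zero₁₂,
      Matrix.isUnit_iff_isUnit_det, Matrix.isUnit_iff_isUnit_det]
    simp only [isUnit_iff_ne_zero, mul_ne_zero_iff, not_and_or, not_not]
  simp only [matrixSpectralRadius, spectralRadius, ← hM, hs, iSup_union]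

lemma lift_finset {n : Type*} [Fintype n] [DecidableEq n] (p : n → Prop) [DecidablePred p]
    (S' : Finset (Subtype p)) :
    ∃ (S : Finset n) (e : {x // x ∈ S'} ≃ {x // x ∈ S}),
      (S'.Nonempty → S.Nonempty) ∧ ∀ x : {x // x ∈ S'}, ((e x : n)) = ((x : Subtype p) : n) := by
  refine ⟨S'.map (Function.Embedding.subtype p), ?_⟩
  have hmem : ∀ x : {x // x ∈ S'}, (x : Subtype p).val ∈ S'.map (Function.Embedding.subtype p) :=
    fun x => by simpa using Finset.mem_map_of_mem (Function.Embedding.subtype p) x.2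
  set f : {x // x ∈ S'} → {y // y ∈ S'.map (Function.Embedding.subtype p)} :=
    fun x => ⟨(x : Subtype p).val, hmem x⟩ with hf
  have hbij : Function.Bijective f := by
    constructor
    · intro x y hxy
      apply Subtype.ext; apply Subtype.ext
      simpa [hf, Subtype.ext_iff] using hxy
    · rintro ⟨y, hy⟩
      obtain ⟨a, ha, hav⟩ := Finset.mem_map.mp hy
      exact ⟨⟨a, ha⟩, Subtype.ext (by simpa using hav)⟩
  refine ⟨Equiv.ofBijective f hbij, ?_, fun x => rfl⟩
  intro ⟨x, hx⟩
  exact ⟨x.val, hmem ⟨x, hx⟩⟩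

lemma lift_step {n : Type*} [Fintype n] [DecidableEq n] (A : Matrix n n ℝ)
    (p : n → Prop) [DecidablePred p]
    (hrad : matrixSpectralRadius
        (A.submatrix (Subtype.val : Subtype p → n) (Subtype.val : Subtype p → n)) =
      matrixSpectralRadius A)
    (hex : ∃ S' : Finset (Subtype p), S'.Nonempty ∧
      MatrixIrreducible
        ((A.submatrix (Subtype.val : Subtype p → n) (Subtype.val : Subtype p → n)).submatrix
          (Subtype.val : {x // x ∈ S'} → Subtype p) (Subtype.val : {x // x ∈ S'} → Subtype p)) ∧
      matrixSpectralRadius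
        ((A.submatrix (Subtype.val : Subtype p → n) (Subtype.val : Subtype p → n)).submatrix
          (Subtype.val : {x // x ∈ S'} → Subtype p) (Subtype.val : {x // x ∈ S'} → Subtype p)) =
        matrixSpectralRadius
          (A.submatrix (Subtype.val : Subtype p → n) (Subtype.val : Subtype p → n))) :
    ∃ S : Finset n, S.Nonempty ∧
      MatrixIrreducible (A.submatrix (Subtype.val : S → n) (Subtype.val : S → n)) ∧
      matrixSpectralRadius (A.submatrix (Subtype.val : S → n) (Subtype.val : S → n)) =
        matrixSpectralRadius A := by
  obtain ⟨S', hne, hirr, hr⟩ := hex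
  obtain ⟨S, e, hSne, hcoe⟩ := lift_finset p S'
  have hmat : (A.submatrix (Subtype.val : S → n) (Subtype.val : S → n)).submatrix e e
      = (A.submatrix (Subtype.val : Subtype p → n) (Subtype.val : Subtype p → n)).submatrix
          (Subtype.val : {x // x ∈ S'} → Subtype p) (Subtype.val : {x // x ∈ S'} → Subtype p) := by
    ext i j
    simp [Matrix.submatrix_apply, hcoe]
  have hmat2 : A.submatrix (Subtype.val : S → n) (Subtype.val : S → n)
      = ((A.submatrix (Subtype.val : S → n) (Subtype.val : S → n)).submatrix e e).submatrix
          e.symm e.symm := by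
    ext i j; simp [Matrix.submatrix_apply]
  refine ⟨S, hSne hne, ?_, ?_⟩
  · rw [hmat2, hmat]
    exact irreducible_submatrix_equiv e.symm hirr
  · rw [hmat2, hmat, radius_submatrix_equiv, hr, hrad]

lemma radius_zero {m : Type*} [Fintype m] [DecidableEq m] :
    matrixSpectralRadius (0 : Matrix m m ℝ) = 0 := by
  have hmap : (0 : Matrix m m ℝ).map (Complex.ofReal : ℝ → ℂ) = 0 :=
    Matrix.map_zero _ Complex.ofReal_zero
  have hsub : spectrum ℂ (0 : Matrix m m ℂ) ⊆ {0} := by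
    intro z hz
    by_contra hz0
    refine (spectrum.mem_iff.mp hz) ?_
    rw [sub_zero]
    exact ((isUnit_iff_ne_zero.mpr hz0).map (algebraMap ℂ (Matrix m m ℂ)))
  simp only [matrixSpectralRadius, spectralRadius, hmap]
  refine le_antisymm ?_ zero_le
  refine iSup₂_le fun z hz => ?_
  have hz0 : z = 0 := hsub hz
  simp [hz0]

universe u

lemma main_aux (N : ℕ) : ∀ (n : Type u) [Fintype n] [DecidableEq n] (A : Matrix n n ℝ),
    Fintype.card n ≤ N → (∀ i j, 0 ≤ A i j) → 0 < matrixSpectralRadius A →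
    ∃ S : Finset n, S.Nonempty ∧
      MatrixIrreducible (A.submatrix (Subtype.val : S → n) (Subtype.val : S → n)) ∧
      matrixSpectralRadius (A.submatrix (Subtype.val : S → n) (Subtype.val : S → n)) =
        matrixSpectralRadius A := by
  induction N with
  | zero =>
    intro n _ _ A hcard hA hpos
    haveI : IsEmpty n := Fintype.card_eq_zero_iff.mp (Nat.le_zero.mp hcard)
    rw [radius_isEmpty] at hpos
    exact absurd hpos (lt_irrefl 0)
  | succ N ih =>
    intro n _ _ A hcard hA hpos
    classical
    rcases isEmpty_or_nonempty n with hemp | hne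
    · rw [radius_isEmpty] at hpos
      exact absurd hpos (lt_irrefl 0)
    by_cases hirr : MatrixIrreducible A
    · -- A itself is irreducible, take S = univ
      have hmat : A.submatrix (Subtype.val : {x // x ∈ (Finset.univ : Finset n)} → n)
          (Subtype.val : {x // x ∈ (Finset.univ : Finset n)} → n)
          = A.submatrix (⇑(Equiv.subtypeUnivEquiv fun x : n => Finset.mem_univ x))
            (⇑(Equiv.subtypeUnivEquiv fun x : n => Finset.mem_univ x)) := rfl
      haveI : Nonempty n := hne
      refine ⟨Finset.univ, Finset.univ_nonempty, ?_, ?_⟩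
      · rw [hmat]; exact irreducible_submatrix_equiv _ hirr
      · rw [hmat]; exact radius_submatrix_equiv _ A
    · -- not irreducible: find a closed proper subset
      simp only [MatrixIrreducible, not_forall, not_exists, not_and, not_lt] at hirr
      obtain ⟨i, j, hij⟩ := hirr
      obtain ⟨p, hpdef⟩ : ∃ p : n → Prop, p = fun s => ∃ k : ℕ, 1 ≤ k ∧ 0 < (A ^ k) i s :=
        ⟨_, rfl⟩
      have hpmem : ∀ s, p s ↔ ∃ k : ℕ, 1 ≤ k ∧ 0 < (A ^ k) i s := fun s => by rw [hpdef]
      have h0 : ∀ t s, p t → ¬p s → A t s = 0 := by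
        intro t s hpt hs
        obtain ⟨k, hk, hkpos⟩ := (hpmem t).mp hpt
        by_contra hts
        have hpos' : 0 < A t s := lt_of_le_of_ne (hA t s) (Ne.symm hts)
        refine hs ((hpmem s).mpr ⟨k + 1, by omega, ?_⟩)
        rw [pow_succ, Matrix.mul_apply]
        exact Finset.sum_pos' (fun u _ => mul_nonneg (pow_entry_nonneg hA k i u) (hA u s))
          ⟨t, Finset.mem_univ t, mul_pos hkpos hpos'⟩
      have hpj : ¬ p j := by
        intro hpj'
        obtain ⟨k, hk, hkp⟩ := (hpmem j).mp hpj'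
        exact absurd hkp (not_lt.mpr (hij k hk))
      by_cases hext : ∃ t, p t
      · obtain ⟨t0, hpt0⟩ := hext
        have split := radius_split A p h0
        rcases le_total
          (matrixSpectralRadius (A.submatrix (Subtype.val : {x // ¬ p x} → n)
            (Subtype.val : {x // ¬ p x} → n)))
          (matrixSpectralRadius (A.submatrix (Subtype.val : Subtype p → n)
            (Subtype.val : Subtype p → n))) with hle | hle
        · -- the p-part achieves the spectral radius
          have hrad : matrixSpectralRadius (A.submatrix (Subtype.val : Subtype p → n)
              (Subtype.val : Subtype p → n)) = matrixSpectralRadius A := by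
            rw [split, sup_eq_left.mpr hle]
          have hclt : Fintype.card (Subtype p) < Fintype.card n :=
            Fintype.card_subtype_lt (x := j) hpj
          refine lift_step A p hrad (ih (Subtype p) _ (by omega) (fun a b => hA _ _) ?_)
          rw [hrad]; exact hpos
        · -- the ¬p-part achieves the spectral radius
          have hrad : matrixSpectralRadius (A.submatrix (Subtype.val : {x // ¬ p x} → n)
              (Subtype.val : {x // ¬ p x} → n)) = matrixSpectralRadius A := by
            rw [split, sup_eq_right.mpr hle]
          have hclt : Fintype.card {x // ¬ p x} < Fintype.card n :=
            Fintype.card_subtype_lt (x := t0) (not_not_intro hpt0)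
          refine lift_step A (fun x => ¬ p x) hrad
            (ih {x // ¬ p x} _ (by omega) (fun a b => hA _ _) ?_)
          rw [hrad]; exact hpos
      · -- the row of i is zero; split off the singleton {i}
        push_neg at hext
        have hrow : ∀ s, A i s = 0 := by
          intro s
          by_contra hs
          refine hext s ((hpmem s).mpr ⟨1, le_refl 1, ?_⟩)
          rw [pow_one]
          exact lt_of_le_of_ne (hA i s) (Ne.symm hs)
        obtain ⟨q, hqdef⟩ : ∃ q : n → Prop, q = fun x => x = i := ⟨_, rfl⟩
        have hqmem : ∀ s, q s ↔ s = i := fun s => by rw [hqdef]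
        have h0q : ∀ t s, q t → ¬ q s → A t s = 0 := by
          intro t s hqt _
          rw [(hqmem t).mp hqt]
          exact hrow s
        have split := radius_split A q h0q
        have hzero : A.submatrix (Subtype.val : Subtype q → n)
            (Subtype.val : Subtype q → n) = 0 := by
          ext a b
          simp only [Matrix.submatrix_apply, Matrix.zero_apply]
          rw [(hqmem a.1).mp a.2]
          exact hrow b.1
        have hq0 : matrixSpectralRadius (A.submatrix (Subtype.val : Subtype q → n)
            (Subtype.val : Subtype q → n)) = 0 := by
          rw [hzero]; exact radius_zero
        have hrad : matrixSpectralRadius (A.submatrix (Subtype.val : {x // ¬ q x} → n)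
            (Subtype.val : {x // ¬ q x} → n)) = matrixSpectralRadius A := by
          rw [split, hq0]
          exact (sup_eq_right.mpr zero_le).symm
        have hclt : Fintype.card {x // ¬ q x} < Fintype.card n :=
          Fintype.card_subtype_lt (x := i) (not_not_intro ((hqmem i).mpr rfl))
        refine lift_step A (fun x => ¬ q x) hrad
          (ih {x // ¬ q x} _ (by omega) (fun a b => hA _ _) ?_)
        rw [hrad]; exact hpos

/--
For a nonnegative square matrix `A` with positive spectral radius, there is a nonempty
subset `S` of the indices such that the principal submatrix of `A` on `S` is irreducible
and has the same spectral radius as `A`.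
-/
theorem exists_irreducible_principal_submatrix_same_spectral_radius
    {n : Type*} [Fintype n] [DecidableEq n] [Nonempty n]
    (A : Matrix n n ℝ) (hA : ∀ i j, 0 ≤ A i j)
    (hpos : 0 < matrixSpectralRadius A) :
    ∃ S : Finset n, S.Nonempty ∧
      MatrixIrreducible (A.submatrix (Subtype.val : S → n) (Subtype.val : S → n)) ∧
      matrixSpectralRadius (A.submatrix (Subtype.val : S → n) (Subtype.val : S → n)) =
        matrixSpectralRadius A := by
  exact main_aux (Fintype.card n) n A le_rfl hA hpos
end

section
/- Let n be a finite index type and let A, B : Matrix n n ℝ be square matrices satisfying 0 ≤ B i j ≤ A i j for all indices i, j. Then the spectral radii satisfy λ(B) ≤ λ(A). -/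
open Matrix

section aux

attribute [local instance] Matrix.linftyOpNormedRing Matrix.linftyOpNormedAlgebra

variable {n : Type*} [Fintype n] [DecidableEq n]

private lemma pow_entrywise_le (A B : Matrix n n ℝ) (hB : ∀ i j, 0 ≤ B i j)
    (hBA : ∀ i j, B i j ≤ A i j) (k : ℕ) :
    ∀ i j, 0 ≤ (B ^ k) i j ∧ (B ^ k) i j ≤ (A ^ k) i j := by
  induction k with
  | zero =>
    intro i j
    by_cases h : i = j <;> simp [pow_zero, Matrix.one_apply, h]
  | succ k ih =>
    intro i j
    rw [pow_succ, pow_succ, Matrix.mul_apply, Matrix.mul_apply]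
    constructor
    · exact Finset.sum_nonneg fun l _ => mul_nonneg (ih i l).1 (hB l j)
    · refine Finset.sum_le_sum fun l _ => ?_
      exact mul_le_mul (ih i l).2 (hBA l j) (hB l j)
        (le_trans (ih i l).1 (ih i l).2)

private lemma nnnorm_map_le (A B : Matrix n n ℝ)
    (h : ∀ i j, 0 ≤ B i j ∧ B i j ≤ A i j) :
    ‖B.map (Complex.ofReal : ℝ → ℂ)‖₊ ≤ ‖A.map (Complex.ofReal : ℝ → ℂ)‖₊ := by
  rw [Matrix.linfty_opNNNorm_def, Matrix.linfty_opNNNorm_def]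
  refine Finset.sup_mono_fun fun i _ => Finset.sum_le_sum fun j _ => ?_
  simp only [Matrix.map_apply, Complex.nnnorm_real]
  have h1 := (h i j).1
  have h2 := (h i j).2
  rw [Real.nnnorm_of_nonneg h1, Real.nnnorm_of_nonneg (h1.trans h2)]
  exact_mod_cast h2

lemma spectral_radius_mono_aux (A B : Matrix n n ℝ) (hB : ∀ i j, 0 ≤ B i j)
    (hBA : ∀ i j, B i j ≤ A i j) :
    spectralRadius ℂ (B.map (Complex.ofReal : ℝ → ℂ)) ≤
      spectralRadius ℂ (A.map (Complex.ofReal : ℝ → ℂ)) := by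
  have hA := spectrum.pow_nnnorm_pow_one_div_tendsto_nhds_spectralRadius
    (A.map (Complex.ofReal : ℝ → ℂ))
  have hBt := spectrum.pow_nnnorm_pow_one_div_tendsto_nhds_spectralRadius
    (B.map (Complex.ofReal : ℝ → ℂ))
  refine le_of_tendsto_of_tendsto' hBt hA fun k => ?_
  have hmap : ∀ M : Matrix n n ℝ,
      (M.map (Complex.ofReal : ℝ → ℂ)) ^ k = (M ^ k).map (Complex.ofReal : ℝ → ℂ) := by
    intro M
    have := map_pow (Complex.ofRealHom.mapMatrix : Matrix n n ℝ →+* Matrix n n ℂ) M k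
    simp only [RingHom.mapMatrix_apply] at this
    exact this.symm
  rw [hmap A, hmap B]
  have hle : (‖(B ^ k).map (Complex.ofReal : ℝ → ℂ)‖₊ : ENNReal) ≤
      ‖(A ^ k).map (Complex.ofReal : ℝ → ℂ)‖₊ := by
    exact_mod_cast nnnorm_map_le _ _ (pow_entrywise_le A B hB hBA k)
  exact ENNReal.rpow_le_rpow hle (by positivity)

end aux

/--
If `0 ≤ B i j ≤ A i j` for all indices `i, j`, then the spectral radius of `B`
is at most the spectral radius of `A`.
-/
theorem spectral_radius_mono_of_entrywise_le
    {n : Type*} [Fintype n] [DecidableEq n]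
    (A B : Matrix n n ℝ) (hB : ∀ i j, 0 ≤ B i j) (hBA : ∀ i j, B i j ≤ A i j) :
    matrixSpectralRadius B ≤ matrixSpectralRadius A := by
  exact spectral_radius_mono_aux A B hB hBA
end

section
/- Let P be a monic polynomial of degree d ≥ 1 with complex coefficients. Then the map χ⁻¹ ∘ P ∘ χ : 𝔻 → 𝔻 extends continuously to the closed unit disc with boundary value z ↦ z^d; precisely, there exists a continuous map G from the closed unit disc {z ∈ ℂ : |z| ≤ 1} to itself such that χ(G(z)) = P(χ(z)) for every z with |z| < 1 and G(z) = z^d for every z with |z| = 1. -/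
open Filter Topology Polynomial

/-- The map `χ(z) = |z|·z / (1 - |z|)` on the open unit disc (as a formula on `ℂ`). -/
noncomputable def chi (z : ℂ) : ℂ :=
  (‖z‖ : ℂ) * z / (1 - (‖z‖ : ℂ))

/-- Radius profile of the inverse of `chi`. -/
noncomputable def rhoAux (R : ℝ) : ℝ := 2 * R / (R + Real.sqrt (R ^ 2 + 4 * R))

lemma rhoAux_zero : rhoAux 0 = 0 := by simp [rhoAux]

lemma sqrt_sq_aux {R : ℝ} (hR : 0 ≤ R) : Real.sqrt (R ^ 2 + 4 * R) ^ 2 = R ^ 2 + 4 * R :=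
  Real.sq_sqrt (by positivity)

lemma denom_pos {R : ℝ} (hR : 0 < R) : 0 < R + Real.sqrt (R ^ 2 + 4 * R) := by positivity

lemma rhoAux_nonneg {R : ℝ} (hR : 0 ≤ R) : 0 ≤ rhoAux R := by
  rcases eq_or_lt_of_le hR with h | h
  · simp [← h, rhoAux]
  · exact div_nonneg (by linarith) (denom_pos h).le

lemma rhoAux_lt_one {R : ℝ} (hR : 0 ≤ R) : rhoAux R < 1 := by
  rcases eq_or_lt_of_le hR with h | h
  · simp [← h, rhoAux]
  · rw [rhoAux, div_lt_one (denom_pos h)]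
    have : R < Real.sqrt (R ^ 2 + 4 * R) := by
      rw [Real.lt_sqrt hR]; linarith
    linarith

lemma rhoAux_sq {R : ℝ} (hR : 0 < R) : rhoAux R ^ 2 + R * rhoAux R = R := by
  have hS := sqrt_sq_aux hR.le
  have hd := (denom_pos hR).ne'
  rw [rhoAux]
  field_simp
  nlinarith [Real.sq_sqrt (show 0 ≤ R * (R + 4) by positivity), denom_pos hR]

lemma rhoAux_le_sqrt {R : ℝ} (hR : 0 ≤ R) : rhoAux R ≤ Real.sqrt R := by
  rcases eq_or_lt_of_le hR with h | h
  · simp [← h, rhoAux]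
  · have h1 : Real.sqrt (4 * R) ≤ Real.sqrt (R ^ 2 + 4 * R) :=
      Real.sqrt_le_sqrt (by nlinarith)
    have h2 : Real.sqrt (4 * R) = 2 * Real.sqrt R := by
      rw [show (4:ℝ) * R = 2 ^ 2 * R by ring, Real.sqrt_mul (by positivity),
        Real.sqrt_sq (by norm_num)]
    have hsR : 0 < Real.sqrt R := Real.sqrt_pos.2 h
    calc rhoAux R ≤ 2 * R / (2 * Real.sqrt R) := by
          apply div_le_div_of_nonneg_left (by linarith) (by linarith) (by rw [← h2]; linarith)
      _ = R / Real.sqrt R := by ring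
      _ = Real.sqrt R := Real.div_sqrt

lemma tendsto_rhoAux : Tendsto rhoAux atTop (𝓝 1) := by
  have heq : ∀ᶠ R : ℝ in atTop, 2 / (1 + Real.sqrt (1 + 4 / R)) = rhoAux R := by
    filter_upwards [eventually_gt_atTop 0] with R hR
    have h1 : R ^ 2 + 4 * R = R ^ 2 * (1 + 4 / R) := by field_simp
    have h2 : Real.sqrt (R ^ 2 + 4 * R) = R * Real.sqrt (1 + 4 / R) := by
      rw [h1, Real.sqrt_mul (by positivity), Real.sqrt_sq hR.le]
    rw [rhoAux, h2]
    rw [show R + R * Real.sqrt (1 + 4 / R) = R * (1 + Real.sqrt (1 + 4 / R)) by ring]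
    rw [show 2 * R = R * 2 by ring, mul_div_mul_left _ _ hR.ne']
  have h0 : Tendsto (fun R : ℝ => 4 / R) atTop (𝓝 0) :=
    tendsto_const_nhds.div_atTop tendsto_id
  have hc : ContinuousAt (fun t : ℝ => 2 / (1 + Real.sqrt (1 + t))) 0 := by
    have : (1:ℝ) + Real.sqrt (1 + 0) ≠ 0 := by
      rw [show (1:ℝ) + 0 = 1 by ring, Real.sqrt_one]; norm_num
    fun_prop (disch := assumption)
  have h1 : (2:ℝ) / (1 + Real.sqrt (1 + 0)) = 1 := by
    rw [add_zero, Real.sqrt_one]; norm_num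
  rw [← h1]
  exact (hc.tendsto.comp h0).congr' heq

/-- The inverse of `chi`, as a formula on all of `ℂ`. -/
noncomputable def invchi (w : ℂ) : ℂ := ((rhoAux (‖w‖) / ‖w‖ : ℝ) : ℂ) * w

lemma invchi_zero : invchi 0 = 0 := by simp [invchi]

lemma abs_invchi (w : ℂ) : ‖invchi w‖ = rhoAux (‖w‖) := by
  rcases eq_or_ne w 0 with rfl | hw
  · simp [invchi, rhoAux_zero]
  · have hw' : 0 < ‖w‖ := norm_pos_iff.mpr hw
    rw [invchi, norm_mul, Complex.norm_real, Real.norm_eq_abs,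
      abs_of_nonneg (div_nonneg (rhoAux_nonneg hw'.le) hw'.le), div_mul_cancel₀ _ hw'.ne']

lemma chi_invchi (w : ℂ) : chi (invchi w) = w := by
  rcases eq_or_ne w 0 with rfl | hw
  · simp [invchi_zero, chi]
  · have hR : 0 < ‖w‖ := norm_pos_iff.mpr hw
    set R := ‖w‖ with hRdef
    set ρ := rhoAux R with hρ
    have hρ1 : ρ < 1 := rhoAux_lt_one hR.le
    have hsq : ρ ^ 2 + R * ρ = R := rhoAux_sq hR
    rw [chi, abs_invchi, invchi, ← hRdef, ← hρ]
    have h1 : (1 : ℂ) - (ρ : ℝ) ≠ 0 := by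
      rw [sub_ne_zero]
      exact fun h => hρ1.ne (by exact_mod_cast h.symm)
    rw [div_eq_iff h1]
    have hreal : ρ * (ρ / R) = 1 - ρ := by
      field_simp
      nlinarith [hsq]
    have : (ρ : ℂ) * ((ρ / R : ℝ) : ℂ) = 1 - (ρ : ℝ) := by
      calc (ρ : ℂ) * ((ρ / R : ℝ) : ℂ) = ((ρ * (ρ / R) : ℝ) : ℂ) := by push_cast; ring
        _ = 1 - (ρ : ℝ) := by rw [hreal]; push_cast; ring
    calc (ρ : ℂ) * (((ρ / R : ℝ) : ℂ) * w) = ((ρ:ℂ) * ((ρ / R : ℝ):ℂ)) * w := by ring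
      _ = (1 - (ρ : ℝ)) * w := by rw [this]
      _ = w * (1 - (ρ:ℝ)) := by ring

lemma continuous_invchi : Continuous invchi := by
  rw [continuous_iff_continuousAt]
  intro w
  rcases eq_or_ne w 0 with rfl | hw
  · rw [ContinuousAt, invchi_zero]
    have hb : ∀ u : ℂ, ‖invchi u‖ ≤ Real.sqrt (‖u‖) := fun u => by
      rw [abs_invchi]
      exact rhoAux_le_sqrt (norm_nonneg u)
    have ht : Tendsto (fun u : ℂ => Real.sqrt (‖u‖)) (𝓝 0) (𝓝 0) := by
      have : ContinuousAt (fun u : ℂ => Real.sqrt (‖u‖)) 0 :=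
        (Real.continuous_sqrt.comp continuous_norm).continuousAt
      simpa using this.tendsto
    exact squeeze_zero_norm hb ht
  · have hR : 0 < ‖w‖ := norm_pos_iff.mpr hw
    have hden : ‖w‖ + Real.sqrt ((‖w‖) ^ 2 + 4 * ‖w‖) ≠ 0 := by
      positivity
    have heq : ∀ᶠ u : ℂ in 𝓝 w, invchi u =
        ((2 / (‖u‖ + Real.sqrt ((‖u‖) ^ 2 + 4 * ‖u‖)) : ℝ) : ℂ) * u := by
      filter_upwards [] with u
      rcases eq_or_ne u 0 with rfl | hu
      · simp [invchi_zero]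
      · have hu' : (‖u‖) ≠ 0 := (norm_pos_iff.mpr hu).ne'
        rw [invchi, rhoAux]
        congr 2
        field_simp
    have h1 : ContinuousAt (fun u : ℂ =>
        ‖u‖ + Real.sqrt ((‖u‖) ^ 2 + 4 * ‖u‖)) w := by
      apply ContinuousAt.add continuous_norm.continuousAt
      exact Real.continuous_sqrt.continuousAt.comp
        ((continuous_norm.pow 2).add
          (continuous_const.mul continuous_norm)).continuousAt
    have h2 : ContinuousAt (fun u : ℂ =>
        (2 / (‖u‖ + Real.sqrt ((‖u‖) ^ 2 + 4 * ‖u‖)) : ℝ)) w :=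
      continuousAt_const.div h1 hden
    have hc : ContinuousAt (fun u : ℂ =>
        ((2 / (‖u‖ + Real.sqrt ((‖u‖) ^ 2 + 4 * ‖u‖)) : ℝ) : ℂ) * u) w :=
      (Complex.continuous_ofReal.continuousAt.comp h2).mul continuousAt_id
    exact hc.congr (heq.mono fun u hu => hu.symm)

lemma eval_div_pow_tendsto_zero (Q : Polynomial ℂ) {d : ℕ} (h : Q.natDegree < d)
    {α : Type*} {l : Filter α} {g : α → ℂ}
    (hg : Tendsto (fun a => ‖g a‖) l atTop) :
    Tendsto (fun a => Q.eval (g a) / (g a) ^ d) l (𝓝 0) := by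
  set n := Q.natDegree with hn
  set C := ∑ i ∈ Finset.range (n + 1), ‖Q.coeff i‖ with hC
  have hC0 : 0 ≤ C := Finset.sum_nonneg fun i _ => norm_nonneg _
  have hbound : ∀ w : ℂ, 1 ≤ ‖w‖ →
      ‖Q.eval w / w ^ d‖ ≤ C / ‖w‖ := by
    intro w hw
    have hw0 : ‖w‖ ≠ 0 := by positivity
    have h1 : ‖Q.eval w‖ ≤ C * ‖w‖ ^ n := by
      rw [Polynomial.eval_eq_sum_range]
      calc ‖∑ i ∈ Finset.range (n + 1), Q.coeff i * w ^ i‖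
          ≤ ∑ i ∈ Finset.range (n + 1), ‖Q.coeff i * w ^ i‖ :=
            norm_sum_le _ _
        _ ≤ ∑ i ∈ Finset.range (n + 1), ‖Q.coeff i‖ * ‖w‖ ^ n := by
            apply Finset.sum_le_sum
            intro i hi
            rw [norm_mul, norm_pow]
            apply mul_le_mul_of_nonneg_left _ (norm_nonneg _)
            exact pow_le_pow_right₀ hw (Nat.lt_succ_iff.mp (Finset.mem_range.mp hi))
        _ = C * ‖w‖ ^ n := by rw [← Finset.sum_mul]
    rw [norm_div, norm_pow]
    rw [div_le_div_iff₀ (by positivity) (by positivity)]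
    calc ‖Q.eval w‖ * ‖w‖
        ≤ (C * ‖w‖ ^ n) * ‖w‖ :=
          mul_le_mul_of_nonneg_right h1 (norm_nonneg _)
      _ = C * ‖w‖ ^ (n + 1) := by ring
      _ ≤ C * ‖w‖ ^ d :=
          mul_le_mul_of_nonneg_left (pow_le_pow_right₀ hw (by omega)) hC0
  have htC : Tendsto (fun a => C / ‖g a‖) l (𝓝 0) :=
    tendsto_const_nhds.div_atTop hg
  apply squeeze_zero_norm' _ htC
  filter_upwards [hg.eventually (eventually_ge_atTop 1)] with a ha
  exact hbound _ ha

lemma abs_chi {z : ℂ} (hz : ‖z‖ < 1) :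
    ‖chi z‖ = (‖z‖) ^ 2 / (1 - ‖z‖) := by
  have h1 : (0:ℝ) < 1 - ‖z‖ := by linarith
  rw [chi, norm_div, norm_mul, Complex.norm_real, Real.norm_eq_abs, abs_of_nonneg (norm_nonneg z),
    show (1:ℂ) - (‖z‖ : ℝ) = ((1 - ‖z‖ : ℝ) : ℂ) by push_cast; ring,
    Complex.norm_real, Real.norm_eq_abs, abs_of_pos h1]
  ring

lemma chi_key {z : ℂ} (hz : ‖z‖ < 1) :
    chi z * (‖z‖ : ℂ) = z * ((‖chi z‖ : ℝ) : ℂ) := by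
  have h1 : (0:ℝ) < 1 - ‖z‖ := by linarith
  have h1' : (1:ℂ) - (‖z‖ : ℝ) ≠ 0 := by
    rw [show (1:ℂ) - (‖z‖ : ℝ) = ((1 - ‖z‖ : ℝ) : ℂ) by push_cast; ring]
    exact_mod_cast h1.ne'
  rw [abs_chi hz, chi]
  push_cast
  field_simp

/--
For a monic complex polynomial `P` of degree `d ≥ 1`, the conjugated map
`χ⁻¹ ∘ P ∘ χ : 𝔻 → 𝔻` extends continuously to the closed unit disc with boundary
value `z ↦ z ^ d`: there is a continuous self-map `G` of the closed unit disc with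
`χ (G z) = P (χ z)` for `|z| < 1` and `G z = z ^ d` for `|z| = 1`.
-/
theorem tuned_polynomial_extends_to_closed_disc
    (d : ℕ) (hd : 1 ≤ d) (P : Polynomial ℂ) (hmonic : P.Monic) (hdeg : P.natDegree = d) :
    ∃ G : ℂ → ℂ,
      ContinuousOn G (Metric.closedBall 0 1) ∧
      Set.MapsTo G (Metric.closedBall 0 1) (Metric.closedBall 0 1) ∧
      (∀ z : ℂ, ‖z‖ < 1 → chi (G z) = P.eval (chi z)) ∧
      (∀ z : ℂ, ‖z‖ = 1 → G z = z ^ d) := by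
  classical
  set G : ℂ → ℂ := fun z => if ‖z‖ < 1 then invchi (P.eval (chi z)) else z ^ d with hG
  have hGlt : ∀ z : ℂ, ‖z‖ < 1 → G z = invchi (P.eval (chi z)) := fun z hz => if_pos hz
  have hGeq : ∀ z : ℂ, ‖z‖ = 1 → G z = z ^ d := fun z hz => by
    simp only [hG, hz, lt_irrefl, if_false]
  have hdegpos : 0 < P.degree := by
    rw [Polynomial.degree_eq_natDegree hmonic.ne_zero, hdeg]
    exact_mod_cast hd
  -- continuity of chi away from the unit circle
  have hchiAt : ∀ x : ℂ, ‖x‖ ≠ 1 → ContinuousAt chi x := by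
    intro x hx
    apply ContinuousAt.div
    · exact (Complex.continuous_ofReal.continuousAt.comp continuous_norm.continuousAt).mul
        continuousAt_id
    · exact continuousAt_const.sub
        (Complex.continuous_ofReal.continuousAt.comp continuous_norm.continuousAt)
    · rw [sub_ne_zero]
      exact fun h => hx (by exact_mod_cast h.symm)
  refine ⟨G, ?_, ?_, ?_, fun z hz => hGeq z hz⟩
  · -- continuity
    intro x hx
    rw [Metric.mem_closedBall, dist_zero_right] at hx
    rcases lt_or_eq_of_le hx with hx1 | hx1
    · -- interior point
      apply ContinuousAt.continuousWithinAt
      have hmem : Metric.ball (0:ℂ) 1 ∈ 𝓝 x := by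
        apply Metric.isOpen_ball.mem_nhds
        rwa [Metric.mem_ball, dist_zero_right]
      have hF : ContinuousAt (fun z => invchi (P.eval (chi z))) x :=
        continuous_invchi.continuousAt.comp
          (P.continuous.continuousAt.comp (hchiAt x hx1.ne))
      apply hF.congr
      filter_upwards [hmem] with z hz
      rw [Metric.mem_ball, dist_zero_right] at hz
      exact (hGlt z hz).symm
    · -- boundary point : |x| = 1
      have hx1' : ‖x‖ = 1 := hx1
      set l := 𝓝[Metric.ball (0:ℂ) 1] x with hl
      have hball_ev : ∀ᶠ z in l, ‖z‖ < 1 := by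
        filter_upwards [self_mem_nhdsWithin] with z hz
        rwa [Metric.mem_ball, dist_zero_right] at hz
      have habs : Tendsto (fun z : ℂ => ‖z‖) l (𝓝 1) := by
        rw [← hx1']
        exact (continuous_norm.tendsto x).mono_left nhdsWithin_le_nhds
      have hzpos : ∀ᶠ z in l, (1:ℝ)/2 < ‖z‖ :=
        habs.eventually (eventually_gt_nhds (by norm_num))
      -- |chi z| → ∞
      have hchi_atTop : Tendsto (fun z : ℂ => ‖chi z‖) l atTop := by
        have hnum : Tendsto (fun z : ℂ => (1 - ‖z‖) / (‖z‖) ^ 2) l (𝓝 0) := by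
          have := ((tendsto_const_nhds.sub habs).div (habs.pow 2) (by norm_num) :
            Tendsto (fun z : ℂ => (1 - ‖z‖) / (‖z‖) ^ 2) l (𝓝 ((1-1)/1^2)))
          norm_num at this
          exact this
        have hmem : Tendsto (fun z : ℂ => (1 - ‖z‖) / (‖z‖) ^ 2) l (𝓝[>] 0) := by
          rw [tendsto_nhdsWithin_iff]
          refine ⟨hnum, ?_⟩
          filter_upwards [hball_ev, hzpos] with z h1 h2
          have : (0:ℝ) < ‖z‖ := by linarith
          exact Set.mem_Ioi.mpr (div_pos (by linarith) (by positivity))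
        have : Tendsto (fun z : ℂ => ((1 - ‖z‖) / ‖z‖ ^ 2)⁻¹) l atTop :=
          tendsto_inv_nhdsGT_zero.comp hmem
        apply this.congr'
        filter_upwards [hball_ev, hzpos] with z h1 h2
        have h3 : (0:ℝ) < ‖z‖ := by linarith
        show ((1 - ‖z‖) / ‖z‖ ^ 2)⁻¹ = ‖chi z‖
        rw [abs_chi h1, inv_div]
      -- |P (chi z)| → ∞
      have hu_atTop : Tendsto (fun z : ℂ => ‖P.eval (chi z)‖) l atTop := by
        have := Polynomial.tendsto_norm_atTop (R := ℂ) P hdegpos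
          (z := fun z : ℂ => chi z) (l := l) (by simpa using hchi_atTop)
        simpa using this
      have hrho1 : Tendsto (fun z : ℂ => rhoAux (‖P.eval (chi z)‖)) l (𝓝 1) :=
        tendsto_rhoAux.comp hu_atTop
      -- c z → 1
      set Q : Polynomial ℂ := P - Polynomial.X ^ d with hQ
      have hQd : Q.natDegree < d := by
        by_cases h0 : Q = 0
        · rw [h0]; simpa using (show 0 < d by omega)
        · have hdlt : Q.degree < (d : ℕ) := by
            have := Polynomial.degree_sub_lt (p := P) (q := Polynomial.X ^ d)
              (by rw [Polynomial.degree_eq_natDegree hmonic.ne_zero, hdeg,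
                Polynomial.degree_X_pow])
              hmonic.ne_zero
              (by rw [hmonic.leadingCoeff, Polynomial.leadingCoeff_X_pow])
            rwa [Polynomial.degree_eq_natDegree hmonic.ne_zero, hdeg] at this
          exact (Polynomial.natDegree_lt_iff_degree_lt h0).mpr hdlt
      have hchi_ne : ∀ᶠ z in l, chi z ≠ 0 := by
        filter_upwards [hchi_atTop.eventually (eventually_ge_atTop 1)] with z hz h
        rw [h] at hz; simp at hz; linarith
      have hu_ne : ∀ᶠ z in l, P.eval (chi z) ≠ 0 := by
        filter_upwards [hu_atTop.eventually (eventually_ge_atTop 1)] with z hz h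
        rw [h] at hz; simp at hz; linarith
      have hc1 : Tendsto (fun z : ℂ => P.eval (chi z) / (chi z) ^ d) l (𝓝 1) := by
        have h0 : Tendsto (fun z : ℂ => Q.eval (chi z) / (chi z) ^ d) l (𝓝 0) :=
          eval_div_pow_tendsto_zero Q hQd hchi_atTop
        have h1 : Tendsto (fun z : ℂ => 1 + Q.eval (chi z) / (chi z) ^ d) l (𝓝 (1 + 0)) :=
          tendsto_const_nhds.add h0
        rw [add_zero] at h1
        apply h1.congr'
        filter_upwards [hchi_ne] with z hz
        have hwd : (chi z) ^ d ≠ 0 := pow_ne_zero _ hz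
        have hQe : Q.eval (chi z) = P.eval (chi z) - (chi z) ^ d := by
          rw [hQ]; simp
        rw [hQe]
        field_simp
        ring
      have hdir : Tendsto (fun z : ℂ => z / ((‖z‖ : ℝ) : ℂ)) l (𝓝 x) := by
        have h1 : Tendsto (fun z : ℂ => z) l (𝓝 x) := tendsto_id.mono_left nhdsWithin_le_nhds
        have h2 : Tendsto (fun z : ℂ => ((‖z‖ : ℝ) : ℂ)) l (𝓝 ((1:ℝ) : ℂ)) :=
          (Complex.continuous_ofReal.tendsto 1).comp habs
        have h3 := h1.div h2 (by norm_num)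
        simp only [Complex.ofReal_one, div_one] at h3; exact h3
      have habs_c : Tendsto
          (fun z : ℂ => ((‖P.eval (chi z) / (chi z) ^ d‖ : ℝ) : ℂ)) l (𝓝 1) := by
        have h1 : Tendsto (fun z : ℂ => ‖P.eval (chi z) / (chi z) ^ d‖) l
            (𝓝 (‖(1:ℂ)‖)) := (continuous_norm.tendsto 1).comp hc1
        have h2 := (Complex.continuous_ofReal.tendsto _).comp h1
        have h3 : ((‖(1:ℂ)‖ : ℝ) : ℂ) = 1 := by simp
        rw [h3] at h2
        exact h2
      have hrho1' : Tendsto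
          (fun z : ℂ => ((rhoAux (‖P.eval (chi z)‖) : ℝ) : ℂ)) l (𝓝 1) := by
        have := (Complex.continuous_ofReal.tendsto 1).comp hrho1
        rw [Complex.ofReal_one] at this; exact this
      have hPhi : Tendsto (fun z : ℂ =>
          ((rhoAux (‖P.eval (chi z)‖) : ℝ) : ℂ) *
          ((z / ((‖z‖ : ℝ) : ℂ)) ^ d *
           ((P.eval (chi z) / (chi z) ^ d) /
             ((‖P.eval (chi z) / (chi z) ^ d‖ : ℝ) : ℂ)))) l (𝓝 (x ^ d)) := by
        have h2 := hdir.pow d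
        have h3 := hc1.div habs_c one_ne_zero
        have h4 := hrho1'.mul (h2.mul h3)
        have h5 : (1:ℂ) * (x ^ d * (1 / 1)) = x ^ d := by norm_num
        rw [h5] at h4
        exact h4
      have hev : ∀ᶠ z in l,
          ((rhoAux (‖P.eval (chi z)‖) : ℝ) : ℂ) *
          ((z / ((‖z‖ : ℝ) : ℂ)) ^ d *
           ((P.eval (chi z) / (chi z) ^ d) /
             ((‖P.eval (chi z) / (chi z) ^ d‖ : ℝ) : ℂ))) = G z := by
        filter_upwards [hball_ev, hzpos, hchi_ne, hu_ne] with z h1 h2 h3 h4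
        rw [hGlt z h1, invchi]
        set w := chi z
        set u := P.eval w
        have hr0 : (0:ℝ) < ‖z‖ := by linarith
        have hrC : ((‖z‖ : ℝ) : ℂ) ≠ 0 := by exact_mod_cast hr0.ne'
        have hRw0 : (0:ℝ) < ‖w‖ := norm_pos_iff.mpr h3
        have hRwC : ((‖w‖ : ℝ) : ℂ) ≠ 0 := by exact_mod_cast hRw0.ne'
        have hRu0 : (0:ℝ) < ‖u‖ := norm_pos_iff.mpr h4
        have hRuC : ((‖u‖ : ℝ) : ℂ) ≠ 0 := by exact_mod_cast hRu0.ne'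
        have hD : z / ((‖z‖ : ℝ) : ℂ) = w / ((‖w‖ : ℝ) : ℂ) := by
          rw [div_eq_div_iff hrC hRwC]
          linear_combination -(chi_key h1)
        have habsq : ‖u / w ^ d‖ = ‖u‖ / (‖w‖) ^ d := by
          rw [norm_div, norm_pow]
        rw [hD, habsq]
        push_cast
        field_simp
        ring_nf
        rw [mul_assoc, ← mul_pow, mul_inv_cancel₀ hRwC, one_pow, mul_one]
      have hlim : Tendsto G l (𝓝 (x ^ d)) := hPhi.congr' hev
      rw [ContinuousWithinAt, hGeq x hx1', ← Metric.ball_union_sphere, nhdsWithin_union,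
        tendsto_sup]
      constructor
      · exact hlim
      · have hsph : Tendsto (fun z : ℂ => z ^ d) (𝓝[Metric.sphere (0:ℂ) 1] x) (𝓝 (x ^ d)) :=
          ((continuous_pow d).tendsto x).mono_left nhdsWithin_le_nhds
        apply hsph.congr'
        filter_upwards [self_mem_nhdsWithin] with z hz
        rw [mem_sphere_zero_iff_norm] at hz
        exact (hGeq z hz).symm
  · -- maps to
    intro z hz
    rw [Metric.mem_closedBall, dist_zero_right] at hz
    rw [Metric.mem_closedBall, dist_zero_right]
    rcases lt_or_eq_of_le hz with h | h
    · rw [hGlt z h, abs_invchi]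
      exact (rhoAux_lt_one (norm_nonneg _)).le
    · rw [hGeq z h, norm_pow, h, one_pow]
  · intro z hz
    rw [hGlt z hz, chi_invchi]
end
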